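/- Let Z be a measurable space, μ0 and μ1 probability measures on Z, π ∈ [0,1], B > 0, and ℓ0, ℓ1 : Z → ℝ bounded measurable functions. Let F be a countable family of measurable functions on Z with sup_{f ∈ F} sup_{z ∈ Z} |f(z)| ≤ ν < ∞ and such that (1/B)·ℓ0 ∈ F and (1/B)·ℓ1 ∈ F. Let Z^0_1, …, Z^0_n be i.i.d. with law μ0 and Z^1_1, …, Z^1_m be i.i.d. with law μ1, all mutually independent, with empirical measures μ̂0_n and μ̂1_m. Then with probability at least 1 − δ, ε_test ≤ ε_train + 2π(1−π)·B·[ IPM_F(μ̂0_n, μ̂1_m) + 2 R_m^{μ1}(F) + 2 R_n^{μ0}(F) + √(18 ν² log(4/δ)) · (1/√m + 1/√n) ]. -/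

import Mathlib

open MeasureTheory

/-- Integral probability metric for a family `F` of real-valued functions. -/
noncomputable def IPM {X : Type*} [MeasurableSpace X] (F : Set (X → ℝ))
    (p q : Measure X) : ℝ :=
  sSup ((fun f => |(∫ x, f x ∂p) - ∫ x, f x ∂q|) '' F)

/-- Empirical measure of the samples `x 0, …, x (m-1)`. -/
noncomputable def empMeasure {X : Type*} [MeasurableSpace X] {m : ℕ}
    (x : Fin m → X) : Measure X :=
  (m : ENNReal)⁻¹ • ∑ i : Fin m, Measure.dirac (x i)

/-- Rademacher complexity of `F` with respect to `μ` and `m` samples: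
the Rademacher signs are encoded by i.i.d. uniform Booleans. -/
noncomputable def rademacher {X : Type*} [MeasurableSpace X] (μ : Measure X)
    (m : ℕ) (F : Set (X → ℝ)) : ℝ :=
  ∫ ω : (Fin m → X) × (Fin m → Bool),
    sSup ((fun f =>
      |(m : ℝ)⁻¹ * ∑ i : Fin m, (if ω.2 i then (1 : ℝ) else -1) * f (ω.1 i)|) '' F)
    ∂((Measure.pi fun _ => μ).prod
        (Measure.pi fun _ => (PMF.uniformOfFintype Bool).toMeasure))


section Helpers
open Real ProbabilityTheory

section Aux
variable {Z : Type*} [MeasurableSpace Z]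

lemma my_integrable_of_bound (μ : Measure Z) [IsFiniteMeasure μ] (f : Z → ℝ)
    (hf : Measurable f) (C : ℝ) (hC : ∀ z, |f z| ≤ C) : Integrable f μ :=
  (integrable_const C).mono' hf.aestronglyMeasurable
    (Filter.Eventually.of_forall (fun z => by simpa [Real.norm_eq_abs] using hC z))

lemma my_integrable_dirac (f : Z → ℝ) (hf : Measurable f) (a : Z) :
    Integrable f (Measure.dirac a) := by
  refine ⟨hf.aestronglyMeasurable, ?_⟩
  rw [HasFiniteIntegral, lintegral_dirac' a (by exact hf.nnnorm.coe_nnreal_ennreal)]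
  exact ENNReal.coe_lt_top

lemma my_abs_integral_le (μ : Measure Z) [IsProbabilityMeasure μ] (f : Z → ℝ)
    (C : ℝ) (hC : ∀ z, |f z| ≤ C) : |∫ z, f z ∂μ| ≤ C := by
  have := norm_integral_le_of_norm_le_const (μ := μ) (f := f) (C := C)
    (Filter.Eventually.of_forall (fun z => by simpa [Real.norm_eq_abs] using hC z))
  simpa [Real.norm_eq_abs] using this

lemma my_abs_avg_le {m : ℕ} (x : Fin m → Z) (f : Z → ℝ) (ν : ℝ) (hν0 : 0 ≤ ν)
    (hb : ∀ z, |f z| ≤ ν) : |(m : ℝ)⁻¹ * ∑ i, f (x i)| ≤ ν := by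
  have h1 : |∑ i, f (x i)| ≤ (m : ℝ) * ν := by
    refine (Finset.abs_sum_le_sum_abs _ _).trans ?_
    calc ∑ i : Fin m, |f (x i)| ≤ ∑ _i : Fin m, ν := Finset.sum_le_sum (fun i _ => hb _)
      _ = (m : ℝ) * ν := by simp [Finset.sum_const, mul_comm]
  rw [abs_mul, abs_inv, abs_of_nonneg (by positivity : (0:ℝ) ≤ (m:ℝ))]
  rcases Nat.eq_zero_or_pos m with hm | hm
  · simpa [hm] using hν0
  · have h2 : (m:ℝ)⁻¹ * |∑ i, f (x i)| ≤ (m:ℝ)⁻¹ * ((m:ℝ) * ν) := by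
      have : (0:ℝ) ≤ (m:ℝ)⁻¹ := by positivity
      exact mul_le_mul_of_nonneg_left h1 this
    have h3 : (m:ℝ)⁻¹ * ((m:ℝ) * ν) = ν := by
      rw [← mul_assoc, inv_mul_cancel₀ (by exact_mod_cast hm.ne' : (m:ℝ) ≠ 0), one_mul]
    linarith

lemma my_integral_empMeasure {m : ℕ} (x : Fin m → Z) (f : Z → ℝ) (hf : Measurable f) :
    ∫ z, f z ∂(empMeasure x) = (m : ℝ)⁻¹ * ∑ i, f (x i) := by
  rw [empMeasure, integral_smul_measure,
    integral_finset_sum_measure (fun i _ => my_integrable_dirac f hf (x i))]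
  simp [integral_dirac' f _ hf.stronglyMeasurable, smul_eq_mul]

end Aux


section Hoeffding
variable {Z : Type*} [MeasurableSpace Z]

-- Hoeffding's lemma (weak form via cosh)
lemma my_mgf_le (μ : Measure Z) [IsProbabilityMeasure μ] (h : Z → ℝ) (hm : Measurable h)
    (c : ℝ) (hc0 : 0 ≤ c) (hb : ∀ z, |h z| ≤ c) (h0 : ∫ z, h z ∂μ = 0) (s : ℝ) :
    ∫ z, Real.exp (s * h z) ∂μ ≤ Real.exp (s ^ 2 * c ^ 2 / 2) := by
  rcases eq_or_lt_of_le hc0 with hc | hc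
  · have hz : ∀ z, h z = 0 := fun z => abs_nonpos_iff.mp (by rw [hc]; exact hb z)
    simp [hz, ← hc]
  · have key : ∀ z, Real.exp (s * h z) ≤
        Real.cosh (s * c) + Real.sinh (s * c) / c * h z := by
      intro z
      have hz := abs_le.mp (hb z)
      have ha : (0:ℝ) ≤ (c - h z) / (2 * c) := by
        apply div_nonneg <;> linarith
      have hb' : (0:ℝ) ≤ (c + h z) / (2 * c) := by
        apply div_nonneg <;> linarith
      have hab : (c - h z) / (2 * c) + (c + h z) / (2 * c) = 1 := by
        field_simp
        ring
      have hcvx := convexOn_exp.2 (Set.mem_univ (-(s * c))) (Set.mem_univ (s * c))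
        ha hb' hab
      simp only [smul_eq_mul] at hcvx
      have harg : (c - h z) / (2 * c) * (-(s * c)) + (c + h z) / (2 * c) * (s * c)
          = s * h z := by
        rw [div_mul_eq_mul_div, div_mul_eq_mul_div, ← add_div,
          div_eq_iff (ne_of_gt (by positivity : (0:ℝ) < 2 * c))]
        ring
      rw [harg] at hcvx
      refine hcvx.trans (le_of_eq ?_)
      rw [Real.cosh_eq, Real.sinh_eq]
      field_simp
      ring
    have hint1 : Integrable (fun z => Real.exp (s * h z)) μ := by
      refine my_integrable_of_bound μ _ ((hm.const_mul s).exp) (Real.exp (|s| * c)) ?_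
      intro z
      rw [abs_of_pos (Real.exp_pos _)]
      apply Real.exp_le_exp.2
      calc s * h z ≤ |s * h z| := le_abs_self _
        _ = |s| * |h z| := abs_mul _ _
        _ ≤ |s| * c := mul_le_mul_of_nonneg_left (hb z) (abs_nonneg _)
    have hinth : Integrable h μ := my_integrable_of_bound μ h hm c hb
    have hint2 : Integrable (fun z => Real.cosh (s * c) + Real.sinh (s * c) / c * h z) μ :=
      (integrable_const _).add (hinth.const_mul _)
    calc ∫ z, Real.exp (s * h z) ∂μ
        ≤ ∫ z, (Real.cosh (s * c) + Real.sinh (s * c) / c * h z) ∂μ :=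
          integral_mono hint1 hint2 key
      _ = Real.cosh (s * c) := by
          rw [integral_add (integrable_const _) (hinth.const_mul _),
            integral_const, MeasureTheory.integral_const_mul, h0]
          simp
      _ ≤ Real.exp ((s * c) ^ 2 / 2) := Real.cosh_le_exp_half_sq _
      _ = Real.exp (s ^ 2 * c ^ 2 / 2) := by rw [mul_pow]

-- one-sided Hoeffding for sums over product measure
lemma my_hoeff_one (μ : Measure Z) [IsProbabilityMeasure μ] (k : ℕ) (h : Z → ℝ)
    (hm : Measurable h) (c : ℝ) (hc : 0 < c) (hb : ∀ z, |h z| ≤ c)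
    (h0 : ∫ z, h z ∂μ = 0) (t : ℝ) (ht : 0 ≤ t) :
    (Measure.pi fun _ : Fin k => μ) {x | (k : ℝ) * t ≤ ∑ i, h (x i)} ≤
      ENNReal.ofReal (Real.exp (-((k : ℝ) * t ^ 2) / (2 * c ^ 2))) := by
  set s : ℝ := t / c ^ 2 with hs
  have hs0 : 0 ≤ s := by positivity
  set X : (Fin k → Z) → ℝ := fun x => ∑ i, h (x i) with hX
  have hXm : Measurable X := Finset.measurable_sum _ (fun i _ => hm.comp (measurable_pi_apply i))
  have hXb : ∀ x, |X x| ≤ (k : ℝ) * c := by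
    intro x
    refine (Finset.abs_sum_le_sum_abs _ _).trans ?_
    calc ∑ i : Fin k, |h (x i)| ≤ ∑ _i : Fin k, c := Finset.sum_le_sum (fun i _ => hb _)
      _ = (k : ℝ) * c := by simp [mul_comm]
  have hint : Integrable (fun x => Real.exp (s * X x)) (Measure.pi fun _ : Fin k => μ) := by
    refine my_integrable_of_bound _ _ ((hXm.const_mul s).exp) (Real.exp (s * ((k:ℝ) * c))) ?_
    intro x
    rw [abs_of_pos (Real.exp_pos _)]
    exact Real.exp_le_exp.2 (mul_le_mul_of_nonneg_left ((le_abs_self _).trans (hXb x)) hs0)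
  have chern := measure_ge_le_exp_mul_mgf (X := X) (μ := Measure.pi fun _ : Fin k => μ)
    ((k : ℝ) * t) hs0 hint
  have hmgf : mgf X (Measure.pi fun _ : Fin k => μ) s = (∫ z, Real.exp (s * h z) ∂μ) ^ k := by
    letI : MeasureSpace Z := ⟨μ⟩
    haveI : SigmaFinite (volume : Measure Z) := inferInstanceAs (SigmaFinite μ)
    rw [mgf]
    have heq : ∀ x : Fin k → Z, Real.exp (s * X x) = ∏ i, Real.exp (s * h (x i)) := by
      intro x
      rw [hX]
      simp only [Finset.mul_sum, Real.exp_sum]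
    simp_rw [heq]
    have hvol : (Measure.pi fun _ : Fin k => μ) = (volume : Measure (Fin k → Z)) := by
      rw [volume_pi]
      rfl
    rw [hvol]
    erw [MeasureTheory.integral_fintype_prod_eq_pow (ι := Fin k) (fun z => Real.exp (s * h z))]
    rw [Fintype.card_fin]
    rfl
  have hone := my_mgf_le μ h hm c hc.le hb h0 s
  have hmgf_le : mgf X (Measure.pi fun _ : Fin k => μ) s ≤ (Real.exp (s ^ 2 * c ^ 2 / 2)) ^ k := by
    rw [hmgf]
    exact pow_le_pow_left₀ (integral_nonneg (fun z => (Real.exp_pos _).le)) hone k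
  have hfinal : Real.exp (-s * ((k:ℝ) * t)) * (Real.exp (s ^ 2 * c ^ 2 / 2)) ^ k
      = Real.exp (-((k : ℝ) * t ^ 2) / (2 * c ^ 2)) := by
    rw [← Real.exp_nat_mul, ← Real.exp_add]
    congr 1
    rw [hs]
    field_simp
    ring
  rw [ENNReal.le_ofReal_iff_toReal_le (measure_ne_top _ _) (by positivity)]
  calc ((Measure.pi fun _ : Fin k => μ) {x | (k : ℝ) * t ≤ X x}).toReal
      ≤ Real.exp (-s * ((k:ℝ) * t)) * mgf X (Measure.pi fun _ : Fin k => μ) s := chern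
    _ ≤ Real.exp (-s * ((k:ℝ) * t)) * (Real.exp (s ^ 2 * c ^ 2 / 2)) ^ k := by
        exact mul_le_mul_of_nonneg_left hmgf_le (Real.exp_pos _).le
    _ = _ := hfinal


lemma my_hoeff_two (μ : Measure Z) [IsProbabilityMeasure μ] (k : ℕ) (hk : 0 < k)
    (f : Z → ℝ) (hf : Measurable f) (c : ℝ) (hc : 0 < c) (hfb : ∀ z, |f z| ≤ c)
    (t : ℝ) (ht : 0 ≤ t) :
    (Measure.pi fun _ : Fin k => μ)
      {x | t < |(k : ℝ)⁻¹ * ∑ i, f (x i) - ∫ z, f z ∂μ|} ≤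
      ENNReal.ofReal (2 * Real.exp (-((k : ℝ) * t ^ 2) / (2 * (2 * c) ^ 2))) := by
  set I : ℝ := ∫ z, f z ∂μ with hI
  set h : Z → ℝ := fun z => f z - I with hdef
  have hm : Measurable h := hf.sub measurable_const
  have hIb : |I| ≤ c := my_abs_integral_le μ f c hfb
  have hb : ∀ z, |h z| ≤ 2 * c := by
    intro z
    calc |f z - I| ≤ |f z| + |I| := abs_sub _ _
      _ ≤ 2 * c := by have := hfb z; linarith
  have h0 : ∫ z, h z ∂μ = 0 := by
    rw [hdef]
    rw [integral_sub (my_integrable_of_bound μ f hf c hfb) (integrable_const _)]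
    simp [hI]
  have hk0 : (0:ℝ) < (k:ℝ) := by exact_mod_cast hk
  have hsub : {x : Fin k → Z | t < |(k : ℝ)⁻¹ * ∑ i, f (x i) - I|} ⊆
      {x | (k : ℝ) * t ≤ ∑ i, h (x i)} ∪ {x | (k : ℝ) * t ≤ ∑ i, (-h) (x i)} := by
    intro x hx
    simp only [Set.mem_setOf_eq] at hx
    have hsum : ∑ i, h (x i) = (∑ i, f (x i)) - (k:ℝ) * I := by
      simp [hdef, Finset.sum_sub_distrib, mul_comm]
    have havg : (k : ℝ)⁻¹ * ∑ i, f (x i) - I = (k:ℝ)⁻¹ * ∑ i, h (x i) := by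
      rw [hsum]
      field_simp
    rw [havg] at hx
    rcases lt_or_ge ((k:ℝ)⁻¹ * ∑ i, h (x i)) 0 with hneg | hpos
    · right
      simp only [Set.mem_setOf_eq, Pi.neg_apply]
      rw [abs_of_neg hneg] at hx
      have : t * (k:ℝ) < -((k:ℝ)⁻¹ * ∑ i, h (x i)) * (k:ℝ) :=
        mul_lt_mul_of_pos_right hx hk0
      rw [Finset.sum_neg_distrib]
      calc (k:ℝ) * t ≤ (k:ℝ) * -((k:ℝ)⁻¹ * ∑ i, h (x i)) := by linarith
        _ = -∑ i, h (x i) := by field_simp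
    · left
      simp only [Set.mem_setOf_eq]
      rw [abs_of_nonneg hpos] at hx
      have : t * (k:ℝ) < ((k:ℝ)⁻¹ * ∑ i, h (x i)) * (k:ℝ) :=
        mul_lt_mul_of_pos_right hx hk0
      calc (k:ℝ) * t ≤ (k:ℝ) * ((k:ℝ)⁻¹ * ∑ i, h (x i)) := by linarith
        _ = ∑ i, h (x i) := by field_simp
  have h1 := my_hoeff_one μ k h hm (2*c) (by positivity) hb h0 t ht
  have h2 := my_hoeff_one μ k (-h) hm.neg (2*c) (by positivity)
    (fun z => by simpa using hb z) (by simp only [Pi.neg_apply]; rw [integral_neg, h0, neg_zero]) t ht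
  calc (Measure.pi fun _ : Fin k => μ) {x | t < |(k : ℝ)⁻¹ * ∑ i, f (x i) - I|}
      ≤ (Measure.pi fun _ : Fin k => μ)
        ({x | (k : ℝ) * t ≤ ∑ i, h (x i)} ∪ {x | (k : ℝ) * t ≤ ∑ i, (-h) (x i)}) :=
        measure_mono hsub
    _ ≤ (Measure.pi fun _ : Fin k => μ) {x | (k : ℝ) * t ≤ ∑ i, h (x i)} +
        (Measure.pi fun _ : Fin k => μ) {x | (k : ℝ) * t ≤ ∑ i, (-h) (x i)} :=
        measure_union_le _ _
    _ ≤ ENNReal.ofReal (Real.exp (-((k : ℝ) * t ^ 2) / (2 * (2*c) ^ 2))) +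
        ENNReal.ofReal (Real.exp (-((k : ℝ) * t ^ 2) / (2 * (2*c) ^ 2))) := add_le_add h1 h2
    _ = ENNReal.ofReal (2 * Real.exp (-((k : ℝ) * t ^ 2) / (2 * (2 * c) ^ 2))) := by
        rw [← ENNReal.ofReal_add (Real.exp_pos _).le (Real.exp_pos _).le]
        congr 1
        ring

lemma my_hoeff_final (μ : Measure Z) [IsProbabilityMeasure μ] (k : ℕ) (hk : 0 < k)
    (f : Z → ℝ) (hf : Measurable f) (ν : ℝ) (hν0 : 0 ≤ ν) (hfb : ∀ z, |f z| ≤ ν)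
    (δ : ℝ) (hδ : 0 < δ) (hδ1 : δ < 1) :
    (Measure.pi fun _ : Fin k => μ)
      {x | Real.sqrt (18 * ν ^ 2 * Real.log (4 / δ)) / Real.sqrt k <
        |(k : ℝ)⁻¹ * ∑ i, f (x i) - ∫ z, f z ∂μ|} ≤ ENNReal.ofReal (δ / 4) := by
  set L : ℝ := Real.log (4 / δ) with hLdef
  have hL4 : Real.log 4 ≤ L := by
    apply Real.log_le_log (by norm_num)
    rw [le_div_iff₀ hδ]
    nlinarith
  have hlog2 : (0:ℝ) < Real.log 2 := Real.log_pos one_lt_two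
  have h42 : Real.log 4 = 2 * Real.log 2 := by
    rw [show (4:ℝ) = 2 ^ 2 by norm_num, Real.log_pow]
    push_cast; ring
  have hL0 : 0 < L := by nlinarith
  set t : ℝ := Real.sqrt (18 * ν ^ 2 * L) / Real.sqrt k with htdef
  have ht0 : 0 ≤ t := by positivity
  rcases eq_or_lt_of_le hν0 with hν | hν
  · have hzero : ∀ z, f z = 0 := fun z => abs_nonpos_iff.mp (by rw [hν]; exact hfb z)
    have hempty : {x : Fin k → Z | t < |(k : ℝ)⁻¹ * ∑ i, f (x i) - ∫ z, f z ∂μ|} = ∅ := by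
      ext x
      simp only [Set.mem_setOf_eq, Set.mem_empty_iff_false, iff_false, not_lt]
      have hs : ∑ i, f (x i) = 0 := Finset.sum_eq_zero (fun i _ => hzero _)
      have hi : ∫ z, f z ∂μ = 0 := by
        rw [integral_congr_ae (Filter.Eventually.of_forall hzero)]
        simp
      rw [hs, hi]
      simpa using ht0
    rw [hempty]
    simp
  · have hk0 : (0:ℝ) < (k:ℝ) := by exact_mod_cast hk
    have harg : 0 ≤ 18 * ν ^ 2 * L := by positivity
    have hkt : (k : ℝ) * t ^ 2 = 18 * ν ^ 2 * L := by
      rw [htdef, div_pow, Real.sq_sqrt harg, Real.sq_sqrt hk0.le]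
      field_simp
    have hexp : -((k : ℝ) * t ^ 2) / (2 * (2 * ν) ^ 2) = -(9 / 4 * L) := by
      rw [hkt]
      field_simp
      ring
    refine (my_hoeff_two μ k hk f hf ν hν hfb t ht0).trans ?_
    rw [hexp]
    apply ENNReal.ofReal_le_ofReal
    have hδ4 : δ / 4 = Real.exp (-L) := by
      rw [Real.exp_neg, hLdef, Real.exp_log (by positivity : (0:ℝ) < 4 / δ)]
      field_simp
    rw [hδ4]
    calc 2 * Real.exp (-(9 / 4 * L)) = Real.exp (Real.log 2 + -(9 / 4 * L)) := by
          rw [Real.exp_add, Real.exp_log two_pos]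
      _ ≤ Real.exp (-L) := by
          apply Real.exp_le_exp.2
          nlinarith


end Hoeffding

lemma my_rad_nonneg {X : Type*} [MeasurableSpace X] (μ : Measure X) (m : ℕ)
    (F : Set (X → ℝ)) : 0 ≤ rademacher μ m F := by
  apply integral_nonneg
  intro ω
  apply Real.sSup_nonneg
  rintro r ⟨f, hf, rfl⟩
  exact abs_nonneg _

end Helpers

set_option maxHeartbeats 2000000 in
/-- Proposition 2: empirical generalization bound for the test risk.
The samples are `n` i.i.d. draws from `μ0` and `m` i.i.d. draws from `μ1`,
all mutually independent. -/
theorem test_risk_le_train_risk_add_empirical_ipm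
    {Z : Type*} [MeasurableSpace Z] (μ0 μ1 : Measure Z)
    [IsProbabilityMeasure μ0] [IsProbabilityMeasure μ1]
    (π : ℝ) (hπ0 : 0 ≤ π) (hπ1 : π ≤ 1)
    (B : ℝ) (hB : 0 < B)
    (ℓ0 ℓ1 : Z → ℝ) (hℓ0meas : Measurable ℓ0) (hℓ1meas : Measurable ℓ1)
    (hℓ0bdd : ∃ C, ∀ z, |ℓ0 z| ≤ C) (hℓ1bdd : ∃ C, ∀ z, |ℓ1 z| ≤ C)
    (F : Set (Z → ℝ)) (hFcount : F.Countable)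
    (hFmeas : ∀ f ∈ F, Measurable f)
    (ν : ℝ) (hν : ∀ f ∈ F, ∀ z, |f z| ≤ ν)
    (hmem0 : (fun z => B⁻¹ * ℓ0 z) ∈ F) (hmem1 : (fun z => B⁻¹ * ℓ1 z) ∈ F)
    (m n : ℕ) (hm : 0 < m) (hn : 0 < n)
    (δ : ℝ) (hδ : 0 < δ) (hδ1 : δ < 1) :
    ENNReal.ofReal (1 - δ) ≤
      ((Measure.pi fun _ : Fin n => μ0).prod (Measure.pi fun _ : Fin m => μ1))
        {ω : (Fin n → Z) × (Fin m → Z) |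
          π * (∫ z, ℓ1 z ∂(ENNReal.ofReal π • μ1 + ENNReal.ofReal (1 - π) • μ0)) +
            (1 - π) * (∫ z, ℓ0 z ∂(ENNReal.ofReal π • μ1 + ENNReal.ofReal (1 - π) • μ0)) ≤
          (π * (∫ z, ℓ1 z ∂μ1) + (1 - π) * (∫ z, ℓ0 z ∂μ0)) +
            2 * π * (1 - π) * B *
              (IPM F (empMeasure ω.1) (empMeasure ω.2) +
                2 * rademacher μ1 m F + 2 * rademacher μ0 n F +
                Real.sqrt (18 * ν ^ 2 * Real.log (4 / δ)) *
                  (1 / Real.sqrt m + 1 / Real.sqrt n))} := by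
  classical
  -- basic objects
  set f0 : Z → ℝ := fun z => B⁻¹ * ℓ0 z with hf0def
  set f1 : Z → ℝ := fun z => B⁻¹ * ℓ1 z with hf1def
  have hf0m : Measurable f0 := hFmeas _ hmem0
  have hf1m : Measurable f1 := hFmeas _ hmem1
  have hf0b : ∀ z, |f0 z| ≤ ν := hν _ hmem0
  have hf1b : ∀ z, |f1 z| ≤ ν := hν _ hmem1
  have hZne : Nonempty Z := by
    by_contra hne
    rw [not_nonempty_iff] at hne
    have h1 : μ0 Set.univ = 1 := measure_univ
    rw [Set.univ_eq_empty_iff.mpr hne] at h1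
    simp at h1
  obtain ⟨z0⟩ := hZne
  have hν0 : 0 ≤ ν := le_trans (abs_nonneg (f1 z0)) (hf1b z0)
  have hℓ0eq : ∀ z, ℓ0 z = B * f0 z := fun z =>
    (mul_inv_cancel_left₀ hB.ne' (ℓ0 z)).symm
  have hℓ1eq : ∀ z, ℓ1 z = B * f1 z := fun z =>
    (mul_inv_cancel_left₀ hB.ne' (ℓ1 z)).symm
  have hℓ0b : ∀ z, |ℓ0 z| ≤ B * ν := by
    intro z
    rw [hℓ0eq z, abs_mul, abs_of_pos hB]
    exact mul_le_mul_of_nonneg_left (hf0b z) hB.le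
  have hℓ1b : ∀ z, |ℓ1 z| ≤ B * ν := by
    intro z
    rw [hℓ1eq z, abs_mul, abs_of_pos hB]
    exact mul_le_mul_of_nonneg_left (hf1b z) hB.le
  -- bad events
  set A1 : Set (Fin n → Z) := {x | Real.sqrt (18 * ν ^ 2 * Real.log (4 / δ)) / Real.sqrt n <
    |(n : ℝ)⁻¹ * ∑ i, f1 (x i) - ∫ z, f1 z ∂μ0|} with hA1def
  set A0 : Set (Fin n → Z) := {x | Real.sqrt (18 * ν ^ 2 * Real.log (4 / δ)) / Real.sqrt n <
    |(n : ℝ)⁻¹ * ∑ i, f0 (x i) - ∫ z, f0 z ∂μ0|} with hA0def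
  set B1 : Set (Fin m → Z) := {x | Real.sqrt (18 * ν ^ 2 * Real.log (4 / δ)) / Real.sqrt m <
    |(m : ℝ)⁻¹ * ∑ i, f1 (x i) - ∫ z, f1 z ∂μ1|} with hB1def
  set B0 : Set (Fin m → Z) := {x | Real.sqrt (18 * ν ^ 2 * Real.log (4 / δ)) / Real.sqrt m <
    |(m : ℝ)⁻¹ * ∑ i, f0 (x i) - ∫ z, f0 z ∂μ1|} with hB0def
  have hA1m : MeasurableSet A1 := measurableSet_lt measurable_const
    ((((Finset.measurable_sum Finset.univ (fun i _ => hf1m.comp (measurable_pi_apply i))).const_mul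
      _).sub measurable_const).abs)
  have hA0m : MeasurableSet A0 := measurableSet_lt measurable_const
    ((((Finset.measurable_sum Finset.univ (fun i _ => hf0m.comp (measurable_pi_apply i))).const_mul
      _).sub measurable_const).abs)
  have hB1m : MeasurableSet B1 := measurableSet_lt measurable_const
    ((((Finset.measurable_sum Finset.univ (fun i _ => hf1m.comp (measurable_pi_apply i))).const_mul
      _).sub measurable_const).abs)
  have hB0m : MeasurableSet B0 := measurableSet_lt measurable_const
    ((((Finset.measurable_sum Finset.univ (fun i _ => hf0m.comp (measurable_pi_apply i))).const_mul
      _).sub measurable_const).abs)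
  set P := ((Measure.pi fun _ : Fin n => μ0).prod (Measure.pi fun _ : Fin m => μ1)) with hPdef
  set U : Set ((Fin n → Z) × (Fin m → Z)) :=
    (Prod.fst ⁻¹' A1) ∪ (Prod.fst ⁻¹' A0) ∪ (Prod.snd ⁻¹' B1) ∪ (Prod.snd ⁻¹' B0) with hUdef
  have hUm : MeasurableSet U :=
    (((hA1m.preimage measurable_fst).union (hA0m.preimage measurable_fst)).union
      (hB1m.preimage measurable_snd)).union (hB0m.preimage measurable_snd)
  -- measure of bad event
  have hfstA : ∀ (A : Set (Fin n → Z)), MeasurableSet A →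
      P (Prod.fst ⁻¹' A) = (Measure.pi fun _ : Fin n => μ0) A := by
    intro A hA
    rw [hPdef, ← Set.prod_univ, Measure.prod_prod, measure_univ, mul_one]
  have hsndB : ∀ (Bs : Set (Fin m → Z)), MeasurableSet Bs →
      P (Prod.snd ⁻¹' Bs) = (Measure.pi fun _ : Fin m => μ1) Bs := by
    intro Bs hBs
    rw [hPdef, ← Set.univ_prod, Measure.prod_prod, measure_univ, one_mul]
  have hPU : P U ≤ ENNReal.ofReal δ := by
    have h1 : P U ≤ P (Prod.fst ⁻¹' A1) + P (Prod.fst ⁻¹' A0) + P (Prod.snd ⁻¹' B1)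
        + P (Prod.snd ⁻¹' B0) := by
      refine le_trans (measure_union_le _ _) ?_
      gcongr
      refine le_trans (measure_union_le _ _) ?_
      gcongr
      exact measure_union_le _ _
    have e1 : P (Prod.fst ⁻¹' A1) ≤ ENNReal.ofReal (δ / 4) := by
      rw [hfstA A1 hA1m]
      exact my_hoeff_final μ0 n hn f1 hf1m ν hν0 hf1b δ hδ hδ1
    have e2 : P (Prod.fst ⁻¹' A0) ≤ ENNReal.ofReal (δ / 4) := by
      rw [hfstA A0 hA0m]
      exact my_hoeff_final μ0 n hn f0 hf0m ν hν0 hf0b δ hδ hδ1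
    have e3 : P (Prod.snd ⁻¹' B1) ≤ ENNReal.ofReal (δ / 4) := by
      rw [hsndB B1 hB1m]
      exact my_hoeff_final μ1 m hm f1 hf1m ν hν0 hf1b δ hδ hδ1
    have e4 : P (Prod.snd ⁻¹' B0) ≤ ENNReal.ofReal (δ / 4) := by
      rw [hsndB B0 hB0m]
      exact my_hoeff_final μ1 m hm f0 hf0m ν hν0 hf0b δ hδ hδ1
    refine h1.trans ?_
    refine le_trans (add_le_add (add_le_add (add_le_add e1 e2) e3) e4) ?_
    rw [← ENNReal.ofReal_add (by positivity) (by positivity),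
      ← ENNReal.ofReal_add (by positivity) (by positivity),
      ← ENNReal.ofReal_add (by positivity) (by positivity)]
    apply ENNReal.ofReal_le_ofReal
    linarith
  -- the good event is contained in the target set
  have hsub : Uᶜ ⊆ {ω : (Fin n → Z) × (Fin m → Z) |
      π * (∫ z, ℓ1 z ∂(ENNReal.ofReal π • μ1 + ENNReal.ofReal (1 - π) • μ0)) +
        (1 - π) * (∫ z, ℓ0 z ∂(ENNReal.ofReal π • μ1 + ENNReal.ofReal (1 - π) • μ0)) ≤
      (π * (∫ z, ℓ1 z ∂μ1) + (1 - π) * (∫ z, ℓ0 z ∂μ0)) +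
        2 * π * (1 - π) * B *
          (IPM F (empMeasure ω.1) (empMeasure ω.2) +
            2 * rademacher μ1 m F + 2 * rademacher μ0 n F +
            Real.sqrt (18 * ν ^ 2 * Real.log (4 / δ)) *
              (1 / Real.sqrt m + 1 / Real.sqrt n))} := by
    intro ω hω
    rw [hUdef] at hω
    simp only [Set.mem_compl_iff, Set.mem_union, not_or, Set.mem_preimage, hA1def, hA0def,
      hB1def, hB0def, Set.mem_setOf_eq, not_lt] at hω
    obtain ⟨⟨⟨hd1, hd2⟩, hd3⟩, hd4⟩ := hω
    simp only [Set.mem_setOf_eq]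
    -- integrability facts
    have hint10 : Integrable ℓ1 μ0 := my_integrable_of_bound μ0 ℓ1 hℓ1meas _ hℓ1b
    have hint11 : Integrable ℓ1 μ1 := my_integrable_of_bound μ1 ℓ1 hℓ1meas _ hℓ1b
    have hint00 : Integrable ℓ0 μ0 := my_integrable_of_bound μ0 ℓ0 hℓ0meas _ hℓ0b
    have hint01 : Integrable ℓ0 μ1 := my_integrable_of_bound μ1 ℓ0 hℓ0meas _ hℓ0b
    -- mixture integrals
    have hmix : ∀ (g : Z → ℝ), Integrable g μ0 → Integrable g μ1 →
        ∫ z, g z ∂(ENNReal.ofReal π • μ1 + ENNReal.ofReal (1 - π) • μ0) =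
          π * ∫ z, g z ∂μ1 + (1 - π) * ∫ z, g z ∂μ0 := by
      intro g hg0 hg1
      rw [integral_add_measure (hg1.smul_measure ENNReal.ofReal_ne_top)
        (hg0.smul_measure ENNReal.ofReal_ne_top), integral_smul_measure,
        integral_smul_measure, ENNReal.toReal_ofReal hπ0,
        ENNReal.toReal_ofReal (by linarith : (0:ℝ) ≤ 1 - π)]
      simp [smul_eq_mul]
    rw [hmix ℓ1 hint10 hint11, hmix ℓ0 hint00 hint01]
    -- rewrite losses in terms of f0 f1
    have hIl10 : ∫ z, ℓ1 z ∂μ0 = B * ∫ z, f1 z ∂μ0 := by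
      simp_rw [hℓ1eq]
      exact integral_const_mul B f1
    have hIl11 : ∫ z, ℓ1 z ∂μ1 = B * ∫ z, f1 z ∂μ1 := by
      simp_rw [hℓ1eq]
      exact integral_const_mul B f1
    have hIl00 : ∫ z, ℓ0 z ∂μ0 = B * ∫ z, f0 z ∂μ0 := by
      simp_rw [hℓ0eq]
      exact integral_const_mul B f0
    have hIl01 : ∫ z, ℓ0 z ∂μ1 = B * ∫ z, f0 z ∂μ1 := by
      simp_rw [hℓ0eq]
      exact integral_const_mul B f0
    rw [hIl10, hIl11, hIl00, hIl01]
    -- IPM bounds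
    have hbdd : BddAbove ((fun f => |(∫ x, f x ∂(empMeasure ω.1)) - ∫ x, f x ∂(empMeasure ω.2)|)
        '' F) := by
      refine ⟨2 * ν, ?_⟩
      rintro r ⟨f, hfF, rfl⟩
      have h1 : |∫ x, f x ∂(empMeasure ω.1)| ≤ ν := by
        rw [my_integral_empMeasure _ _ (hFmeas f hfF)]
        exact my_abs_avg_le _ _ _ hν0 (hν f hfF)
      have h2 : |∫ x, f x ∂(empMeasure ω.2)| ≤ ν := by
        rw [my_integral_empMeasure _ _ (hFmeas f hfF)]
        exact my_abs_avg_le _ _ _ hν0 (hν f hfF)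
      calc |(∫ x, f x ∂(empMeasure ω.1)) - ∫ x, f x ∂(empMeasure ω.2)|
          ≤ |∫ x, f x ∂(empMeasure ω.1)| + |∫ x, f x ∂(empMeasure ω.2)| := abs_sub _ _
        _ ≤ 2 * ν := by linarith
    have hIPM1 : |((n:ℝ)⁻¹ * ∑ i, f1 (ω.1 i)) - ((m:ℝ)⁻¹ * ∑ i, f1 (ω.2 i))| ≤
        IPM F (empMeasure ω.1) (empMeasure ω.2) := by
      have := le_csSup hbdd (Set.mem_image_of_mem
        (fun f => |(∫ x, f x ∂(empMeasure ω.1)) - ∫ x, f x ∂(empMeasure ω.2)|) hmem1)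
      rwa [my_integral_empMeasure _ _ hf1m, my_integral_empMeasure _ _ hf1m] at this
    have hIPM0 : |((n:ℝ)⁻¹ * ∑ i, f0 (ω.1 i)) - ((m:ℝ)⁻¹ * ∑ i, f0 (ω.2 i))| ≤
        IPM F (empMeasure ω.1) (empMeasure ω.2) := by
      have := le_csSup hbdd (Set.mem_image_of_mem
        (fun f => |(∫ x, f x ∂(empMeasure ω.1)) - ∫ x, f x ∂(empMeasure ω.2)|) hmem0)
      rwa [my_integral_empMeasure _ _ hf0m, my_integral_empMeasure _ _ hf0m] at this
    -- abbreviations for the arithmetic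
    set tS : ℝ := Real.sqrt (18 * ν ^ 2 * Real.log (4 / δ)) with htSdef
    have htS0 : 0 ≤ tS := Real.sqrt_nonneg _
    set a1 : ℝ := ∫ z, f1 z ∂μ0
    set b1 : ℝ := ∫ z, f1 z ∂μ1
    set a0 : ℝ := ∫ z, f0 z ∂μ0
    set b0 : ℝ := ∫ z, f0 z ∂μ1
    set An1 : ℝ := (n:ℝ)⁻¹ * ∑ i, f1 (ω.1 i)
    set An0 : ℝ := (n:ℝ)⁻¹ * ∑ i, f0 (ω.1 i)
    set Am1 : ℝ := (m:ℝ)⁻¹ * ∑ i, f1 (ω.2 i)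
    set Am0 : ℝ := (m:ℝ)⁻¹ * ∑ i, f0 (ω.2 i)
    set IP : ℝ := IPM F (empMeasure ω.1) (empMeasure ω.2)
    set Rm : ℝ := rademacher μ1 m F
    set Rn : ℝ := rademacher μ0 n F
    have hRm : 0 ≤ Rm := my_rad_nonneg _ _ _
    have hRn : 0 ≤ Rn := my_rad_nonneg _ _ _
    obtain ⟨hd1a, hd1b⟩ := abs_le.mp hd1
    obtain ⟨hd2a, hd2b⟩ := abs_le.mp hd2
    obtain ⟨hd3a, hd3b⟩ := abs_le.mp hd3
    obtain ⟨hd4a, hd4b⟩ := abs_le.mp hd4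
    have hI1 : An1 - Am1 ≤ IP := le_trans (le_abs_self _) hIPM1
    have hI0 : Am0 - An0 ≤ IP := by linarith [neg_le_abs (An0 - Am0), hIPM0]
    have hkey : (a1 - b1) + (b0 - a0) ≤ 2 * IP + 2 * (tS / Real.sqrt n)
        + 2 * (tS / Real.sqrt m) := by linarith
    have hπp : 0 ≤ π * (1 - π) := mul_nonneg hπ0 (by linarith)
    have hc : 0 ≤ π * (1 - π) * B := mul_nonneg hπp hB.le
    have hmul := mul_le_mul_of_nonneg_left hkey hc
    have hRm' : 0 ≤ π * (1 - π) * B * Rm := mul_nonneg hc hRm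
    have hRn' : 0 ≤ π * (1 - π) * B * Rn := mul_nonneg hc hRn
    have hexpand : π * (π * (B * b1) + (1 - π) * (B * a1)) +
        (1 - π) * (π * (B * b0) + (1 - π) * (B * a0)) -
        (π * (B * b1) + (1 - π) * (B * a0)) =
        π * (1 - π) * B * (a1 - b1 + (b0 - a0)) := by ring
    have h2 : 2 * π * (1 - π) * B *
        (IP + 2 * Rm + 2 * Rn + tS * (1 / Real.sqrt m + 1 / Real.sqrt n)) =
        π * (1 - π) * B * (2 * IP + 2 * (tS / Real.sqrt n) + 2 * (tS / Real.sqrt m)) +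
        4 * (π * (1 - π) * B * Rm) + 4 * (π * (1 - π) * B * Rn) := by ring
    linarith [hmul, hRm', hRn', hexpand, h2]
  -- conclude
  calc ENNReal.ofReal (1 - δ) = 1 - ENNReal.ofReal δ := by
        rw [ENNReal.ofReal_sub 1 hδ.le, ENNReal.ofReal_one]
    _ ≤ 1 - P U := tsub_le_tsub_left hPU 1
    _ = P Uᶜ := by
        rw [measure_compl hUm (measure_ne_top _ _), measure_univ]
    _ ≤ _ := measure_mono hsub
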